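/- arXiv:0811.0056 — 4 statements merged into one kernel-verified Lean document; each statement's English description precedes it below -/
import Mathlib

section
/- For every integer k ≥ 1 and every x ∈ X one has S^k e_x = Σ_{y ∈ (T^k)⁻¹({x})} (I_k(y))^{-1/2} e_y, where the sum runs over the (finite) fiber of the k-th iterate T^k over x. -/
open Classical

noncomputable section

/-- `ℓ²(X)`: the Hilbert space of square-summable complex families indexed by `X`. -/
abbrev l2 (X : Type*) : Type _ := lp (fun _ : X => ℂ) 2

/-- The orthonormal basis vector `e_x` of `ℓ²(X)`. -/
def e {X : Type*} (x : X) : l2 X := lp.single 2 x 1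

/-- `I_k(x) = ∏_{j=1}^{k} ℒ(1)(T^j(x))`, where `ℒ(1)(x) = card (T⁻¹({x}))`
(with `I_0 = 1`). -/
def Ik {X : Type*} (T : X → X) (k : ℕ) (x : X) : ℝ :=
  ∏ j ∈ Finset.range k, (Nat.card (T ⁻¹' {T^[j + 1] x}) : ℝ)

end

lemma Ik_nonneg {X : Type*} (T : X → X) (k : ℕ) (x : X) : 0 ≤ Ik T k x :=
  Finset.prod_nonneg fun _ _ => Nat.cast_nonneg _

lemma Ik_succ {X : Type*} (T : X → X) (k : ℕ) (z : X) :
    Ik T (k + 1) z = Ik T k (T z) * (Nat.card (T ⁻¹' {T z}) : ℝ) := by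
  unfold Ik
  rw [Finset.prod_range_succ']
  congr 1

/-- Let `X` be a compact Hausdorff space, `T : X → X` a covering map and
`S` the bounded operator on `ℓ²(X)` with `S e_x = (ℒ(1)(x))^{-1/2} ∑_{y ∈ T⁻¹({x})} e_y`.
Then for every `k ≥ 1` and every `x ∈ X` one has
`S^k e_x = ∑_{y ∈ (T^k)⁻¹({x})} (I_k(y))^{-1/2} e_y`. -/
theorem pow_S_apply_basis {X : Type*} [TopologicalSpace X] [CompactSpace X] [T2Space X]
    (T : X → X) (hT : IsCoveringMap T) (hTsurj : Function.Surjective T)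
    (S : l2 X →L[ℂ] l2 X)
    (hS : ∀ x : X, S (e x) = (((Real.sqrt (Nat.card (T ⁻¹' {x})))⁻¹ : ℝ) : ℂ) •
      ∑ᶠ y ∈ T ⁻¹' {x}, e y) :
    ∀ k : ℕ, 1 ≤ k → ∀ x : X,
      (S ^ k) (e x) =
        ∑ᶠ y ∈ (T^[k]) ⁻¹' {x}, (((Real.sqrt (Ik T k y))⁻¹ : ℝ) : ℂ) • e y := by
  classical
  have hc : Continuous T := hT.continuous
  have hfin : ∀ x : X, (T ⁻¹' {x}).Finite := fun x =>
    ((isClosed_singleton.preimage hc).isCompact).finite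
      (isDiscrete_iff_discreteTopology.mpr (hT x).1)
  have hfink : ∀ k : ℕ, ∀ x : X, ((T^[k]) ⁻¹' {x}).Finite := by
    intro k
    induction k with
    | zero =>
      intro x
      simp only [Function.iterate_zero, Set.preimage_id]
      exact Set.finite_singleton x
    | succ n ih =>
      intro x
      have h1 : (T^[n + 1]) ⁻¹' {x} = T ⁻¹' ((T^[n]) ⁻¹' {x}) := by
        ext z
        simp [Function.iterate_succ_apply]
      have h2 : T ⁻¹' ((T^[n]) ⁻¹' {x}) = ⋃ y ∈ (T^[n]) ⁻¹' {x}, T ⁻¹' {y} := by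
        ext z; simp
      rw [h1, h2]
      exact (ih x).biUnion fun y _ => hfin y
  suffices h : ∀ k : ℕ, ∀ x : X,
      (S ^ k) (e x) =
        ∑ y ∈ (hfink k x).toFinset, (((Real.sqrt (Ik T k y))⁻¹ : ℝ) : ℂ) • e y by
    intro k _ x
    rw [finsum_mem_eq_finite_toFinset_sum _ (hfink k x)]
    exact h k x
  intro k
  induction k with
  | zero =>
    intro x
    have hset : (hfink 0 x).toFinset = {x} := by
      ext z
      simp
    rw [hset]
    simp [Ik]
  | succ n ih =>
    intro x
    have key : S ^ (n + 1) = S * S ^ n := pow_succ' S n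
    rw [key]
    have : (S * S ^ n) (e x) = S ((S ^ n) (e x)) := rfl
    rw [this, ih x, map_sum]
    -- rewrite each summand
    have hsummand : ∀ y ∈ (hfink n x).toFinset,
        S ((((Real.sqrt (Ik T n y))⁻¹ : ℝ) : ℂ) • e y) =
          ∑ z ∈ (hfin y).toFinset,
            (((Real.sqrt (Ik T (n + 1) z))⁻¹ : ℝ) : ℂ) • e z := by
      intro y _
      rw [map_smul, hS y, finsum_mem_eq_finite_toFinset_sum _ (hfin y), smul_comm,
        Finset.smul_sum, Finset.smul_sum]
      refine Finset.sum_congr rfl fun z hz => ?_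
      have hz' : T z = y := by simpa using hz
      rw [smul_smul, ← Complex.ofReal_mul, ← mul_inv, ← Real.sqrt_mul (Nat.cast_nonneg _)]
      rw [Ik_succ T n z, hz', mul_comm]
    rw [Finset.sum_congr rfl hsummand]
    -- combine the double sum
    have hset : (hfink (n + 1) x).toFinset =
        (hfink n x).toFinset.biUnion fun y => (hfin y).toFinset := by
      ext z
      simp [Function.iterate_succ_apply, eq_comm]
    rw [hset, Finset.sum_biUnion]
    intro y1 h1 y2 h2 hne
    simp only [Finset.disjoint_left, Set.Finite.mem_toFinset, Set.mem_preimage,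
      Set.mem_singleton_iff]
    intro a ha1 ha2
    exact hne (ha1 ▸ ha2 ▸ rfl)
end

section
/- For every integer k ≥ 1 and every x ∈ X one has (S*)^k e_x = (I_k(x))^{-1/2} e_{T^k(x)}, where S* is the Hilbert-space adjoint of S. -/
open Classical

lemma l2_ext_inner {X : Type*} (v w : l2 X)
    (h : ∀ y : X, @inner ℂ _ _ (e y) v = @inner ℂ _ _ (e y) w) : v = w := by
  ext y
  simpa [e, lp.inner_single_left] using h y

lemma adjoint_S_apply {X : Type*} [TopologicalSpace X] [CompactSpace X]
    [T2Space X] (T : X → X) (hT : IsCoveringMap T)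
    (S : l2 X →L[ℂ] l2 X)
    (hS : ∀ x : X, S (e x) = (((Real.sqrt (Nat.card (T ⁻¹' {x})))⁻¹ : ℝ) : ℂ) •
      ∑ᶠ y ∈ T ⁻¹' {x}, e y) (x : X) :
    (ContinuousLinearMap.adjoint S) (e x) =
      (((Real.sqrt (Nat.card (T ⁻¹' {T x})))⁻¹ : ℝ) : ℂ) • e (T x) := by
  have hfin : ∀ z : X, (T ⁻¹' {z}).Finite := fun z =>
    ((IsClosed.preimage hT.continuous isClosed_singleton).isCompact).finite (isDiscrete_iff_discreteTopology.mpr (hT z).1)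
  apply l2_ext_inner
  intro z
  rw [ContinuousLinearMap.adjoint_inner_right, hS z]
  have hfs : ∑ᶠ y ∈ T ⁻¹' {z}, e y = ∑ y ∈ (hfin z).toFinset, e y := by
    rw [← finsum_mem_coe_finset, (hfin z).coe_toFinset]
  rw [hfs, inner_smul_left, sum_inner, inner_smul_right]
  have h1 : ∀ w u : X, @inner ℂ _ _ (e w) (e u) = if w = u then 1 else 0 := by
    intro w u
    simp only [e, lp.inner_single_left]
    rw [lp.single_apply]
    split_ifs with h <;> simp [h]
  have h2 : @inner ℂ _ _ (e z) (e (T x)) = if z = T x then 1 else 0 := h1 z (T x)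
  rw [Finset.sum_congr rfl (fun w _ => h1 w x), h2]
  rw [Finset.sum_ite_eq' (hfin z).toFinset x (fun _ => (1 : ℂ))]
  simp only [Set.Finite.mem_toFinset, Set.mem_preimage, Set.mem_singleton_iff]
  by_cases hxz : T x = z
  · subst hxz
    simp [Complex.conj_ofReal]
  · rw [if_neg hxz, if_neg (fun h => hxz h.symm)]
    simp

/-- Let `X` be a compact Hausdorff space, `T : X → X` a covering map and
`S` the bounded operator on `ℓ²(X)` with `S e_x = (ℒ(1)(x))^{-1/2} ∑_{y ∈ T⁻¹({x})} e_y`.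
Then for every `k ≥ 1` and every `x ∈ X` one has `(S*)^k e_x = (I_k(x))^{-1/2} e_{T^k(x)}`,
where `S*` is the Hilbert-space adjoint of `S`. -/
theorem pow_adjoint_S_apply_basis {X : Type*} [TopologicalSpace X] [CompactSpace X]
    [T2Space X] (T : X → X) (hT : IsCoveringMap T) (hTsurj : Function.Surjective T)
    (S : l2 X →L[ℂ] l2 X)
    (hS : ∀ x : X, S (e x) = (((Real.sqrt (Nat.card (T ⁻¹' {x})))⁻¹ : ℝ) : ℂ) •
      ∑ᶠ y ∈ T ⁻¹' {x}, e y) :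
    ∀ k : ℕ, 1 ≤ k → ∀ x : X,
      ((ContinuousLinearMap.adjoint S) ^ k) (e x) =
        (((Real.sqrt (Ik T k x))⁻¹ : ℝ) : ℂ) • e (T^[k] x) := by
  have key : ∀ k : ℕ, ∀ x : X,
      ((ContinuousLinearMap.adjoint S) ^ k) (e x) =
        (((Real.sqrt (Ik T k x))⁻¹ : ℝ) : ℂ) • e (T^[k] x) := by
    intro k
    induction k with
    | zero => intro x; simp [Ik]
    | succ n ih =>
      intro x
      rw [pow_succ, ContinuousLinearMap.mul_apply, adjoint_S_apply T hT S hS x,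
        map_smul, ih (T x)]
      rw [smul_smul, Function.iterate_succ_apply]
      congr 1
      have hIk : Ik T (n + 1) x = Ik T n (T x) * (Nat.card (T ⁻¹' {T x}) : ℝ) := by
        rw [Ik, Finset.prod_range_succ']
        simp [Ik, Function.iterate_succ_apply]
      have hnn : 0 ≤ Ik T n (T x) := Finset.prod_nonneg fun _ _ => Nat.cast_nonneg _
      rw [hIk, Real.sqrt_mul hnn, mul_inv]
      push_cast
      ring
  exact fun k _ x => key k x
end

section
/- For every continuous function f : X → ℂ one has S* ∘ M_f ∘ S = M_{L(f)} as bounded operators on ℓ²(X), where L(f) = ℒ(1)⁻¹·ℒ(f) is the transfer operator. -/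
open Classical

noncomputable section

/-- The normalized transfer operator
`L(f)(x) = ℒ(1)(x)⁻¹ · ∑_{y ∈ T⁻¹({x})} f(y)`, where `ℒ(1)(x) = card (T⁻¹({x}))`. -/
def transferOp {X : Type*} (T : X → X) (f : X → ℂ) (x : X) : ℂ :=
  (Nat.card (T ⁻¹' {x}) : ℂ)⁻¹ * ∑ᶠ y ∈ T ⁻¹' {x}, f y

end

lemma inner_e_left {X : Type*} (z : X) (u : l2 X) : @inner ℂ _ _ (e z) u = u z := by
  simp [e, lp.inner_single_left]

lemma e_apply {X : Type*} (y z : X) : (e y : l2 X) z = if z = y then 1 else 0 := by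
  simp [e, lp.single_apply, Pi.single_apply]

open ContinuousLinearMap in
/-- Let `X` be a compact Hausdorff space, `T : X → X` a covering map, and
`S` the bounded operator on `ℓ²(X)` with `S e_x = (ℒ(1)(x))^{-1/2} ∑_{y ∈ T⁻¹({x})} e_y`.
For every continuous `f : X → ℂ` one has `S* ∘ M_f ∘ S = M_{L(f)}`, where
`L(f) = ℒ(1)⁻¹·ℒ(f)` is the transfer operator and `M_g` denotes the (unique) bounded
operator with `M_g e_x = g(x) e_x`. -/
theorem adjoint_Mf_S_eq_transfer {X : Type*} [TopologicalSpace X] [CompactSpace X]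
    [T2Space X] (T : X → X) (hT : IsCoveringMap T) (hTsurj : Function.Surjective T)
    (S : l2 X →L[ℂ] l2 X)
    (hS : ∀ x : X, S (e x) = (((Real.sqrt (Nat.card (T ⁻¹' {x})))⁻¹ : ℝ) : ℂ) •
      ∑ᶠ y ∈ T ⁻¹' {x}, e y) :
    ∀ f : C(X, ℂ), ∀ Mf ML : l2 X →L[ℂ] l2 X,
      (∀ x : X, Mf (e x) = f x • e x) →
      (∀ x : X, ML (e x) = transferOp T f x • e x) →
      (adjoint S) ∘L Mf ∘L S = ML := by
  intro f Mf ML hMf hML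
  have hfib : ∀ x : X, (T ⁻¹' {x}).Finite := fun x => by
    have hd : DiscreteTopology (T ⁻¹' {x}) := (hT x).1
    have hc : IsCompact (T ⁻¹' {x}) :=
      (isClosed_singleton.preimage hT.continuous).isCompact
    exact hc.finite (isDiscrete_iff_discreteTopology.mpr hd)
  have hSx : ∀ x : X, S (e x) = (((Real.sqrt (Nat.card (T ⁻¹' {x})))⁻¹ : ℝ) : ℂ) •
      ∑ y ∈ (hfib x).toFinset, e y := fun x => by
    rw [hS x]
    congr 1
    rw [← finsum_mem_coe_finset, Set.Finite.coe_toFinset]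
  have htr : ∀ x : X, transferOp T f x =
      (Nat.card (T ⁻¹' {x}) : ℂ)⁻¹ * ∑ y ∈ (hfib x).toFinset, f y := fun x => by
    rw [transferOp]
    congr 1
    rw [← finsum_mem_coe_finset, Set.Finite.coe_toFinset]
  have key : ∀ x : X, (adjoint S) (Mf (S (e x))) = ML (e x) := by
    intro x
    have hMfS : Mf (S (e x)) = (((Real.sqrt (Nat.card (T ⁻¹' {x})))⁻¹ : ℝ) : ℂ) •
        ∑ y ∈ (hfib x).toFinset, f y • e y := by
      rw [hSx x, map_smul, map_sum]
      simp_rw [hMf]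
    apply lp.ext
    funext z
    have hz : ((adjoint S) (Mf (S (e x)))) z =
        @inner ℂ _ _ (S (e z)) (Mf (S (e x))) := by
      rw [← inner_e_left, adjoint_inner_right]
    have hR : (ML (e x)) z = transferOp T f x * (if z = x then 1 else 0) := by
      rw [hML]
      simp [e_apply]
    rw [hz, hSx z, hMfS, inner_smul_left, inner_smul_right, sum_inner, hR]
    simp_rw [inner_sum, inner_smul_right, inner_e_left]
    by_cases hzx : z = x
    · subst hzx
      have hdiag : ∑ y ∈ (hfib z).toFinset, ∑ y' ∈ (hfib z).toFinset,
          f y' * (e y' : l2 X) y = ∑ y ∈ (hfib z).toFinset, f y := by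
        refine Finset.sum_congr rfl fun y hy => ?_
        simp_rw [e_apply, mul_ite, mul_one, mul_zero]
        simp [Finset.sum_ite_eq, hy]
      rw [hdiag, htr z, if_pos rfl, mul_one, Complex.conj_ofReal, ← mul_assoc]
      congr 1
      rw [← Complex.ofReal_mul, ← mul_inv,
        Real.mul_self_sqrt (Nat.cast_nonneg _)]
      push_cast
      ring
    · have hzero : ∑ y ∈ (hfib z).toFinset, ∑ y' ∈ (hfib x).toFinset,
          f y' * (e y' : l2 X) y = 0 := by
        refine Finset.sum_eq_zero fun y hy => Finset.sum_eq_zero fun y' hy' => ?_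
        have h1 : T y = z := (hfib z).mem_toFinset.mp hy
        have h2 : T y' = x := (hfib x).mem_toFinset.mp hy'
        have : y ≠ y' := fun h => hzx (by rw [← h1, h, h2])
        rw [e_apply, if_neg this, mul_zero]
      rw [hzero, if_neg hzx]
      ring
  refine ContinuousLinearMap.ext fun v => ?_
  have h1 : HasSum (fun i => lp.single 2 i (v i)) v :=
    lp.hasSum_single (by norm_num) v
  have hsingle : ∀ i : X, lp.single 2 i (v i) = v i • e i := fun i => by
    rw [e, ← lp.single_smul, smul_eq_mul, mul_one]
  have hA : HasSum (fun i => ((adjoint S) ∘L Mf ∘L S) (lp.single 2 i (v i)))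
      (((adjoint S) ∘L Mf ∘L S) v) := h1.mapL _
  have hB : HasSum (fun i => ML (lp.single 2 i (v i))) (ML v) := h1.mapL _
  refine hA.unique ?_
  convert hB using 2 with i
  simp only [hsingle, map_smul, comp_apply]
  rw [key]
end

section
/- Let V₁, …, V_t be a finite open cover of X such that the restriction of T to each V_i is injective, let v₁, …, v_t : X → [0,1] be a continuous partition of unity subordinate to this cover (i.e. Σᵢ vᵢ = 1 and the support of vᵢ is contained in Vᵢ), and set uᵢ = ((ℒ(1)∘T)·vᵢ)^{1/2}. Then Σ_{i=1}^{t} M_{uᵢ} S S* M_{uᵢ} = 1 as bounded operators on ℓ²(X). -/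
open Classical

section Aux

variable {X : Type*}

open scoped InnerProductSpace

lemma e_eq_smul (x : X) (c : ℂ) : lp.single 2 x c = c • e x := by
  rw [e, ← lp.single_smul, smul_eq_mul, mul_one]

lemma inner_e_left_s9 (x : X) (f : l2 X) : ⟪e x, f⟫_ℂ = f x := by
  rw [e, lp.inner_single_left]
  simp [RCLike.inner_apply]

lemma inner_e_e (x y : X) : ⟪e x, e y⟫_ℂ = if y = x then 1 else 0 := by
  rw [inner_e_left_s9, e, lp.single_apply]
  split_ifs <;> simp_all

lemma clm_ext_basis {A B : l2 X →L[ℂ] l2 X} (h : ∀ x, A (e x) = B (e x)) : A = B := by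
  refine ContinuousLinearMap.ext fun f => ?_
  have hf : HasSum (fun x : X => lp.single 2 x (f x)) f :=
    lp.hasSum_single (by norm_num) f
  have h' : ∀ x : X, A (lp.single 2 x (f x)) = B (lp.single 2 x (f x)) := by
    intro x
    rw [e_eq_smul, map_smul, map_smul, h]
  exact (hf.mapL A).unique (by simpa only [h'] using hf.mapL B)

end Aux

open scoped InnerProductSpace in
open ContinuousLinearMap in
/-- Let `X` be a compact Hausdorff space, `T : X → X` a covering map, and
`S` the bounded operator on `ℓ²(X)` with `S e_x = (ℒ(1)(x))^{-1/2} ∑_{y ∈ T⁻¹({x})} e_y`.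
Let `V₁, …, V_t` be a finite open cover of `X` on each member of which `T` is injective,
let `v₁, …, v_t : X → [0,1]` be a continuous partition of unity subordinate to it, and put
`uᵢ = ((ℒ(1)∘T)·vᵢ)^{1/2}`. Then `∑ᵢ M_{uᵢ} S S* M_{uᵢ} = 1` on `ℓ²(X)`. -/
theorem sum_Mu_S_adjointS_Mu_eq_one {X : Type*} [TopologicalSpace X] [CompactSpace X]
    [T2Space X] (T : X → X) (hT : IsCoveringMap T) (hTsurj : Function.Surjective T)
    (S : l2 X →L[ℂ] l2 X)
    (hS : ∀ x : X, S (e x) = (((Real.sqrt (Nat.card (T ⁻¹' {x})))⁻¹ : ℝ) : ℂ) •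
      ∑ᶠ y ∈ T ⁻¹' {x}, e y)
    (t : ℕ) (V : Fin t → Set X) (hVopen : ∀ i, IsOpen (V i))
    (hVcover : (⋃ i, V i) = Set.univ) (hVinj : ∀ i, Set.InjOn T (V i))
    (v : Fin t → C(X, ℝ)) (hv01 : ∀ i x, v i x ∈ Set.Icc (0 : ℝ) 1)
    (hvsum : ∀ x : X, ∑ i, v i x = 1) (hvsupp : ∀ i, tsupport (v i) ⊆ V i)
    (Mu : Fin t → (l2 X →L[ℂ] l2 X))
    (hMu : ∀ i (x : X), Mu i (e x) =
      ((Real.sqrt ((Nat.card (T ⁻¹' {T x}) : ℝ) * v i x) : ℝ) : ℂ) • e x) :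
    ∑ i, Mu i ∘L S ∘L (adjoint S) ∘L Mu i = 1 := by
  classical
  have fibfin : ∀ y : X, (T ⁻¹' {y}).Finite := fun y =>
    ((isClosed_singleton.preimage hT.continuous).isCompact).finite (isDiscrete_iff_discreteTopology.mpr (hT y).1)
  have Npos : ∀ y : X, 0 < ((Nat.card (T ⁻¹' {y}) : ℝ)) := by
    intro y
    obtain ⟨x, hx⟩ := hTsurj y
    haveI : Finite (T ⁻¹' {y}) := (fibfin y).to_subtype
    haveI : Nonempty (T ⁻¹' {y}) := ⟨⟨x, hx⟩⟩
    exact_mod_cast Nat.card_pos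
  have sqpos : ∀ y, 0 < Real.sqrt (Nat.card (T ⁻¹' {y})) :=
    fun y => Real.sqrt_pos.2 (Npos y)
  have hFsum : ∀ y : X, (∑ᶠ z ∈ T ⁻¹' {y}, e z : l2 X)
      = ∑ z ∈ (fibfin y).toFinset, e z := by
    intro y
    exact finsum_mem_eq_finite_toFinset_sum _ (fibfin y)
  have hmem : ∀ {y z : X}, z ∈ (fibfin y).toFinset ↔ T z = y := by
    intro y z
    rw [Set.Finite.mem_toFinset]
    rfl
  -- the adjoint on basis vectors
  have hSadj : ∀ x : X, adjoint S (e x)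
      = (((Real.sqrt (Nat.card (T ⁻¹' {T x})))⁻¹ : ℝ) : ℂ) • e (T x) := by
    intro x
    apply lp.ext
    funext y
    trans (⟪S (e y), e x⟫_ℂ)
    · rw [← inner_e_left_s9, adjoint_inner_right]
    rw [hS y, hFsum y, inner_smul_left, sum_inner]
    simp only [inner_e_e]
    rw [Finset.sum_ite_eq (fibfin y).toFinset x (fun _ => (1 : ℂ))]
    rw [lp.coeFn_smul, Pi.smul_apply, smul_eq_mul, e, lp.single_apply]
    by_cases h : T x = y
    · rw [Pi.single_apply, if_pos h.symm, if_pos (hmem.mpr h)]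
      subst h
      simp [Complex.conj_ofReal]
    · rw [Pi.single_apply, if_neg (fun (hc : y = T x) => h hc.symm), if_neg (fun hc => h (hmem.mp hc))]
      simp
  -- main computation on basis vectors
  apply clm_ext_basis
  intro x
  rw [ContinuousLinearMap.sum_apply, ContinuousLinearMap.one_apply]
  have hterm : ∀ i, (Mu i ∘L S ∘L adjoint S ∘L Mu i) (e x)
      = ∑ z ∈ (fibfin (T x)).toFinset,
          (((Real.sqrt (v i x) * Real.sqrt (v i z) : ℝ)) : ℂ) • e z := by
    intro i
    simp only [comp_apply]
    rw [hMu i x]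
    simp only [map_smul]
    rw [hSadj x]
    simp only [map_smul]
    rw [hS (T x), hFsum (T x)]
    simp only [map_smul, map_sum]
    rw [Finset.smul_sum, Finset.smul_sum, Finset.smul_sum]
    refine Finset.sum_congr rfl fun z hz => ?_
    have hTz : T z = T x := hmem.mp hz
    rw [hMu i z, hTz]
    rw [smul_smul, smul_smul, smul_smul]
    congr 1
    have hN : (0 : ℝ) ≤ (Nat.card (T ⁻¹' {T x}) : ℝ) := (Npos (T x)).le
    have hsq : Real.sqrt ((Nat.card (T ⁻¹' {T x}) : ℝ)) ≠ 0 := (sqpos (T x)).ne'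
    norm_cast
    rw [Real.sqrt_mul hN (v i x), Real.sqrt_mul hN (v i z)]
    field_simp
  rw [Finset.sum_congr rfl fun i _ => hterm i, Finset.sum_comm]
  have hscal : ∀ z ∈ (fibfin (T x)).toFinset,
      (∑ i, Real.sqrt (v i x) * Real.sqrt (v i z)) = if z = x then 1 else 0 := by
    intro z hz
    have hTz : T z = T x := hmem.mp hz
    by_cases hzx : z = x
    · subst hzx
      rw [if_pos rfl, ← hvsum z]
      refine Finset.sum_congr rfl fun i _ => ?_
      exact Real.mul_self_sqrt (hv01 i z).1
    · rw [if_neg hzx]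
      refine Finset.sum_eq_zero fun i _ => ?_
      rcases eq_or_ne (v i x) 0 with h | h
      · simp [h]
      rcases eq_or_ne (v i z) 0 with h' | h'
      · simp [h']
      exact absurd (hVinj i (hvsupp i (subset_tsupport _ h')) (hvsupp i (subset_tsupport _ h)) hTz)
        hzx
  calc ∑ z ∈ (fibfin (T x)).toFinset, ∑ i : Fin t,
        (((Real.sqrt (v i x) * Real.sqrt (v i z) : ℝ)) : ℂ) • e z
      = ∑ z ∈ (fibfin (T x)).toFinset, if z = x then e z else 0 := by
        refine Finset.sum_congr rfl fun z hz => ?_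
        rw [← Finset.sum_smul]
        have : (∑ i : Fin t, (((Real.sqrt (v i x) * Real.sqrt (v i z) : ℝ)) : ℂ))
            = ((if z = x then (1 : ℝ) else 0 : ℝ) : ℂ) := by
          rw [← hscal z hz]
          push_cast
          rfl
        rw [this]
        split_ifs <;> simp
    _ = e x := by
        rw [Finset.sum_ite_eq' (fibfin (T x)).toFinset x (fun z => e z),
          if_pos (hmem.mpr rfl)]
end
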